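/- Let n ≥ 3. The Lie subalgebra sim(n−2) = {X ∈ so(n−1,1) : Xℓ ∈ ℝℓ} is a maximal proper Lie subalgebra of so(n−1,1): sim(n−2) ≠ so(n−1,1), and every Lie subalgebra h of so(n−1,1) with sim(n−2) ⊆ h satisfies h = sim(n−2) or h = so(n−1,1). -/

import Mathlib

open Matrix

attribute [local instance] LieRing.ofAssociativeRing

/-- The Minkowski bilinear form on `ℝⁿ`, given by the diagonal matrix `diag(-1,1,…,1)`. -/
noncomputable def minkMat (n : ℕ) : Matrix (Fin n) (Fin n) ℝ :=
  Matrix.diagonal (fun i => if (i : ℕ) = 0 then (-1 : ℝ) else 1)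

/-- The Lorentz Lie algebra `so(n-1,1)`, as a set of `n × n` real matrices. -/
def soSet (n : ℕ) : Set (Matrix (Fin n) (Fin n) ℝ) :=
  {X | Xᵀ * minkMat n + minkMat n * X = 0}

/-- The set `sim(n-2) = {X ∈ so(n-1,1) : Xℓ ∈ ℝℓ}`, the stabilizer of the null line `ℝℓ`. -/
def simSet (n : ℕ) (l : Fin n → ℝ) : Set (Matrix (Fin n) (Fin n) ℝ) :=
  {X | X ∈ soSet n ∧ ∃ c : ℝ, X.mulVec l = c • l}

namespace SimMaxAux

variable {n : ℕ}

noncomputable def Bf (n : ℕ) (x y : Fin n → ℝ) : ℝ := x ⬝ᵥ ((minkMat n).mulVec y)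

noncomputable def Kf (n : ℕ) (a b : Fin n → ℝ) : Matrix (Fin n) (Fin n) ℝ :=
  vecMulVec a ((minkMat n).mulVec b) - vecMulVec b ((minkMat n).mulVec a)

lemma Bf_apply (x y : Fin n → ℝ) :
    Bf n x y = ∑ i, x i * ((if (i : ℕ) = 0 then (-1:ℝ) else 1) * y i) := by
  simp [Bf, dotProduct, minkMat, mulVec_diagonal]

lemma Bf_comm (x y : Fin n → ℝ) : Bf n x y = Bf n y x := by
  simp only [Bf_apply]
  exact Finset.sum_congr rfl fun i _ => by ring

lemma Bf_split (hn0 : 0 < n) (x y : Fin n → ℝ) :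
    Bf n x y = x ⬝ᵥ y - 2 * (x ⟨0, hn0⟩ * y ⟨0, hn0⟩) := by
  have key : ∀ i : Fin n, x i * ((if (i:ℕ) = 0 then (-1:ℝ) else 1) * y i)
      = x i * y i - (if i = (⟨0, hn0⟩ : Fin n) then 2 * (x i * y i) else 0) := by
    intro i
    by_cases h : i = (⟨0, hn0⟩ : Fin n)
    · subst h; simp; ring
    · have h' : (i:ℕ) ≠ 0 := fun hc => h (Fin.ext hc)
      simp [h, h']
  rw [Bf_apply, Finset.sum_congr rfl fun i _ => key i, Finset.sum_sub_distrib,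
    Finset.sum_ite_eq' Finset.univ (⟨0,hn0⟩ : Fin n) (fun i => 2 * (x i * y i))]
  simp [dotProduct]

lemma eta_eta (v : Fin n → ℝ) : (minkMat n).mulVec ((minkMat n).mulVec v) = v := by
  funext i
  by_cases h : (i:ℕ) = 0 <;> simp [minkMat, mulVec_diagonal, h]

lemma Kf_mem_so (a b : Fin n → ℝ) : Kf n a b ∈ soSet n := by
  show (Kf n a b)ᵀ * minkMat n + minkMat n * Kf n a b = 0
  ext i j
  simp only [Kf, minkMat, transpose_sub, transpose_apply, Matrix.sub_apply, Matrix.add_apply,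
    Matrix.mul_diagonal, Matrix.diagonal_mul, vecMulVec_apply, mulVec_diagonal,
    Matrix.sub_mul, Matrix.mul_sub, Matrix.zero_apply, Matrix.transpose_apply]
  ring

lemma Kf_mulVec (a b u : Fin n → ℝ) :
    (Kf n a b).mulVec u = Bf n b u • a - Bf n a u • b := by
  funext i
  have h1 : ∀ p q : Fin n → ℝ, (vecMulVec p ((minkMat n).mulVec q)).mulVec u i
      = p i * Bf n q u := by
    intro p q
    simp only [mulVec, dotProduct, vecMulVec_apply, Bf_apply, minkMat, mulVec_diagonal,
      Matrix.diagonal_apply, ite_mul, zero_mul, Finset.sum_ite_eq, Finset.mem_univ, if_true]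
    rw [Finset.mul_sum]
    exact Finset.sum_congr rfl fun k _ => by split_ifs <;> ring
  simp only [Kf, Matrix.sub_mulVec, Pi.sub_apply, Pi.smul_apply, smul_eq_mul, h1]
  ring

lemma mulKK (a b c d : Fin n → ℝ) :
    vecMulVec a ((minkMat n).mulVec b) * vecMulVec c ((minkMat n).mulVec d)
      = Bf n b c • vecMulVec a ((minkMat n).mulVec d) := by
  ext i j
  simp only [mul_apply, vecMulVec_apply, Matrix.smul_apply, smul_eq_mul, Bf_apply, minkMat,
    mulVec_diagonal, Matrix.diagonal_apply, ite_mul, zero_mul, Finset.sum_ite_eq,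
    Finset.mem_univ, if_true]
  rw [Finset.sum_mul]
  exact Finset.sum_congr rfl fun k _ => by split_ifs <;> ring

lemma lieKK (m u v w : Fin n → ℝ) (hum : Bf n u m = 0) (hvm : Bf n v m = 0) :
    ⁅Kf n u v, Kf n m w⁆ = Bf n v w • Kf n m u - Bf n u w • Kf n m v := by
  have hmu : Bf n m u = 0 := (Bf_comm m u).trans hum
  have hmv : Bf n m v = 0 := (Bf_comm m v).trans hvm
  have hwu : Bf n w u = Bf n u w := Bf_comm w u
  have hwv : Bf n w v = Bf n v w := Bf_comm w v
  rw [Ring.lie_def]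
  simp only [Kf, Matrix.sub_mul, Matrix.mul_sub, mulKK, hum, hvm, hmu, hmv, hwu, hwv,
    zero_smul, smul_sub]
  module

lemma so_skew {X : Matrix (Fin n) (Fin n) ℝ} (hX : X ∈ soSet n) (u v : Fin n → ℝ) :
    Bf n (X.mulVec u) v = - Bf n u (X.mulVec v) := by
  have hX' : Xᵀ * minkMat n = -(minkMat n * X) := by
    have h := hX
    simp only [soSet, Set.mem_setOf_eq] at h
    rw [eq_neg_iff_add_eq_zero]
    exact h
  calc Bf n (X.mulVec u) v = (X.mulVec u) ⬝ᵥ ((minkMat n).mulVec v) := rfl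
    _ = ((minkMat n).mulVec v) ⬝ᵥ (X.mulVec u) := dotProduct_comm _ _
    _ = (Xᵀ.mulVec ((minkMat n).mulVec v)) ⬝ᵥ u := by
        rw [dotProduct_mulVec, mulVec_transpose]
    _ = (((Xᵀ * minkMat n)).mulVec v) ⬝ᵥ u := by rw [mulVec_mulVec]
    _ = ((-(minkMat n * X)).mulVec v) ⬝ᵥ u := by rw [hX']
    _ = -(((minkMat n).mulVec (X.mulVec v)) ⬝ᵥ u) := by
        rw [Matrix.neg_mulVec, neg_dotProduct, mulVec_mulVec]
    _ = - Bf n u (X.mulVec v) := by rw [dotProduct_comm]; rfl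

lemma sumsq_eq_zero {x : Fin n → ℝ} (h : ∑ i, x i * x i = 0) : x = 0 := by
  funext i
  have := (Finset.sum_eq_zero_iff_of_nonneg (fun i _ => mul_self_nonneg (x i))).mp h i
    (Finset.mem_univ i)
  exact mul_self_eq_zero.mp this

lemma aniso (hn0 : 0 < n) (l : Fin n → ℝ) (hl0 : l ⟨0, hn0⟩ ≠ 0) (x : Fin n → ℝ)
    (h1 : Bf n x l = 0) (h2 : x ⬝ᵥ l = 0) (h3 : Bf n x x = 0) : x = 0 := by
  have hx0 : x ⟨0, hn0⟩ = 0 := by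
    have := Bf_split hn0 x l
    rw [h1, h2] at this
    have h4 : x ⟨0, hn0⟩ * l ⟨0, hn0⟩ = 0 := by linarith
    rcases mul_eq_zero.mp h4 with h | h
    · exact h
    · exact absurd h hl0
  have := Bf_split hn0 x x
  rw [h3, hx0] at this
  have h5 : x ⬝ᵥ x = 0 := by linarith
  exact sumsq_eq_zero (by simpa [dotProduct] using h5)

end SimMaxAux

/-- `sim(n-2)` is a maximal proper Lie subalgebra of `so(n-1,1)`: it is a proper subalgebra,
and any Lie subalgebra `h` with `sim(n-2) ⊆ h ⊆ so(n-1,1)` equals `sim(n-2)` or `so(n-1,1)`. -/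
theorem simSet_maximal_in_so (n : ℕ) (hn : 3 ≤ n) (l : Fin n → ℝ)
    (hl : l ≠ 0) (hnull : dotProduct l ((minkMat n).mulVec l) = 0)
    (SO SIM : LieSubalgebra ℝ (Matrix (Fin n) (Fin n) ℝ))
    (hSO : (SO : Set (Matrix (Fin n) (Fin n) ℝ)) = soSet n)
    (hSIM : (SIM : Set (Matrix (Fin n) (Fin n) ℝ)) = simSet n l) :
    SIM ≠ SO ∧
      ∀ h : LieSubalgebra ℝ (Matrix (Fin n) (Fin n) ℝ),
        SIM ≤ h → h ≤ SO → h = SIM ∨ h = SO := by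
  classical
  open SimMaxAux in
  have hn0 : 0 < n := by omega
  have hmemSO : ∀ X, X ∈ SO ↔ X ∈ soSet n := fun X => by
    rw [← SetLike.mem_coe, hSO]
  have hmemSIM : ∀ X, X ∈ SIM ↔ X ∈ simSet n l := fun X => by
    rw [← SetLike.mem_coe, hSIM]
  have hBll : Bf n l l = 0 := hnull
  have hdot : l ⬝ᵥ l = ∑ i, l i * l i := rfl
  have hsum_ll : l ⬝ᵥ l = 2 * (l ⟨0, hn0⟩ * l ⟨0, hn0⟩) := by
    have h := Bf_split hn0 l l
    rw [hBll] at h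
    linarith
  have hr : l ⬝ᵥ l ≠ 0 := by
    intro h0
    exact hl (sumsq_eq_zero (hdot ▸ h0))
  have hl0 : l ⟨0, hn0⟩ ≠ 0 := by
    intro h0
    apply hr
    rw [hsum_ll, h0]
    ring
  set m : Fin n → ℝ := (l ⬝ᵥ l)⁻¹ • ((minkMat n).mulVec l) with hm
  have hBxm : ∀ x : Fin n → ℝ, Bf n x m = (l ⬝ᵥ l)⁻¹ * (x ⬝ᵥ l) := by
    intro x
    show x ⬝ᵥ ((minkMat n).mulVec m) = _
    rw [hm, Matrix.mulVec_smul, eta_eta]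
    simp [dotProduct_smul, smul_eq_mul]
  have hBlm : Bf n l m = 1 := by
    rw [hBxm, inv_mul_cancel₀ hr]
  have hBml : Bf n m l = 1 := (Bf_comm m l).trans hBlm
  have hKml : ∀ w : Fin n → ℝ, Bf n w l = 0 → (Kf n m w).mulVec l = -w := by
    intro w hw
    rw [Kf_mulVec, hw, hBml]
    simp
  -- decomposition lemma
  have hdecomp : ∀ Z ∈ soSet n,
      (Z + Kf n m (Z.mulVec l - Bf n (Z.mulVec l) m • l) ∈ simSet n l) ∧
      Bf n (Z.mulVec l - Bf n (Z.mulVec l) m • l) l = 0 ∧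
      Bf n (Z.mulVec l - Bf n (Z.mulVec l) m • l) m = 0 := by
    intro Z hZ
    set w := Z.mulVec l - Bf n (Z.mulVec l) m • l with hwdef
    have hZll : Bf n (Z.mulVec l) l = 0 := by
      have h1 := so_skew hZ l l
      have h2 := Bf_comm l (Z.mulVec l)
      linarith [h1, h2.symm ▸ h1]
    have hwl : Bf n w l = 0 := by
      show (Z.mulVec l - Bf n (Z.mulVec l) m • l) ⬝ᵥ ((minkMat n).mulVec l) = 0
      rw [sub_dotProduct, smul_dotProduct]
      have : (Z.mulVec l) ⬝ᵥ ((minkMat n).mulVec l) = 0 := hZll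
      rw [this]
      have : l ⬝ᵥ ((minkMat n).mulVec l) = 0 := hBll
      rw [this]
      simp
    have hwm : Bf n w m = 0 := by
      show (Z.mulVec l - Bf n (Z.mulVec l) m • l) ⬝ᵥ ((minkMat n).mulVec m) = 0
      rw [sub_dotProduct, smul_dotProduct]
      have h1 : l ⬝ᵥ ((minkMat n).mulVec m) = 1 := hBlm
      rw [h1]
      have h2 : (Z.mulVec l) ⬝ᵥ ((minkMat n).mulVec m) = Bf n (Z.mulVec l) m := rfl
      rw [h2]
      simp
    refine ⟨⟨?_, Bf n (Z.mulVec l) m, ?_⟩, hwl, hwm⟩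
    · have hK := Kf_mem_so (n := n) m w
      simp only [soSet, Set.mem_setOf_eq] at hZ hK ⊢
      rw [Matrix.transpose_add, Matrix.add_mul, Matrix.mul_add]
      have : Zᵀ * minkMat n + (Kf n m w)ᵀ * minkMat n + (minkMat n * Z + minkMat n * Kf n m w)
          = (Zᵀ * minkMat n + minkMat n * Z) + ((Kf n m w)ᵀ * minkMat n + minkMat n * Kf n m w) := by
        abel
      rw [this, hZ, hK, add_zero]
    · rw [Matrix.add_mulVec, hKml w hwl, hwdef]
      abel
  constructor
  · -- SIM ≠ SO
    obtain ⟨j, hjne, hjl⟩ : ∃ j : Fin n, j ≠ ⟨0, hn0⟩ ∧ l j ≠ 0 := by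
      by_contra hcon
      push_neg at hcon
      have : l ⬝ᵥ l = ∑ i, (if i = (⟨0, hn0⟩ : Fin n) then l ⟨0, hn0⟩ * l ⟨0, hn0⟩ else 0) := by
        rw [hdot]
        refine Finset.sum_congr rfl fun i _ => ?_
        by_cases h : i = (⟨0, hn0⟩ : Fin n)
        · subst h; simp
        · simp [h, hcon i h]
      rw [Finset.sum_ite_eq' Finset.univ] at this
      simp at this
      rw [hsum_ll] at this
      have : l ⟨0, hn0⟩ * l ⟨0, hn0⟩ = 0 := by linarith
      exact hl0 (mul_self_eq_zero.mp this)
    have hi1 : (1 : ℕ) < n := by omega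
    have hi2 : (2 : ℕ) < n := by omega
    set k : Fin n := if j = ⟨1, hi1⟩ then ⟨2, hi2⟩ else ⟨1, hi1⟩ with hk
    have hkne0 : k ≠ ⟨0, hn0⟩ := by
      rw [hk]; split <;> simp [Fin.ext_iff]
    have hkj : k ≠ j := by
      rw [hk]; split
      · rename_i hj; rw [hj]; simp [Fin.ext_iff]
      · rename_i hj; exact fun hc => hj hc.symm
    set w : Fin n → ℝ := l j • (Pi.single k 1 : Fin n → ℝ) - l k • (Pi.single j 1 : Fin n → ℝ) with hw
    have hwk : w k = l j := by
      rw [hw]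
      simp [Pi.single_eq_same, Pi.single_eq_of_ne hkj]
    have hwne : w ≠ 0 := fun h0 => hjl (by rw [← hwk, h0]; rfl)
    have hwdotl : w ⬝ᵥ l = 0 := by
      rw [hw]
      simp [sub_dotProduct, smul_dotProduct, single_dotProduct]
      ring
    have hwi0 : w ⟨0, hn0⟩ = 0 := by
      rw [hw]
      simp [Pi.single_eq_of_ne (Ne.symm hkne0), Pi.single_eq_of_ne (Ne.symm hjne)]
    have hwBl : Bf n w l = 0 := by
      rw [Bf_split hn0, hwdotl, hwi0]
      ring
    intro he
    have hNso : Kf n m w ∈ soSet n := Kf_mem_so m w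
    have hNSO : Kf n m w ∈ SO := (hmemSO _).mpr hNso
    have hNSIM : Kf n m w ∈ SIM := by rw [he]; exact hNSO
    obtain ⟨-, c, hc⟩ := (hmemSIM _).mp hNSIM
    rw [hKml w hwBl] at hc
    have hdl : (-w) ⬝ᵥ l = (c • l) ⬝ᵥ l := by rw [hc]
    rw [neg_dotProduct, hwdotl, smul_dotProduct] at hdl
    have hc0 : c = 0 := by
      rcases (by simpa using hdl.symm : c = 0 ∨ l = 0) with h' | h'
      · exact h'
      · exact absurd h' hl
    rw [hc0, zero_smul] at hc
    exact hwne (neg_eq_zero.mp hc)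
  · -- maximality
    intro h hSIMh hhSO
    by_cases hc : h ≤ SIM
    · left; exact le_antisymm hc hSIMh
    · right
      refine le_antisymm hhSO ?_
      obtain ⟨X, hXh, hXSIM⟩ : ∃ X, X ∈ h ∧ X ∉ SIM := by
        by_contra hcon
        push_neg at hcon
        exact hc fun x hx => hcon x hx
      have hXso : X ∈ soSet n := (hmemSO X).mp (hhSO hXh)
      obtain ⟨hmemX, hw0l, hw0m⟩ := hdecomp X hXso
      set w0 : Fin n → ℝ := X.mulVec l - Bf n (X.mulVec l) m • l with hw0def
      have hw0ne : w0 ≠ 0 := by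
        intro h0
        apply hXSIM
        refine (hmemSIM X).mpr ⟨hXso, Bf n (X.mulVec l) m, ?_⟩
        have := sub_eq_zero.mp (hw0def ▸ h0)
        exact this
      have hw0dotl : w0 ⬝ᵥ l = 0 := by
        have := hBxm w0
        rw [hw0m] at this
        rcases mul_eq_zero.mp this.symm with h' | h'
        · exact absurd h' (inv_ne_zero hr)
        · exact h'
      have hBw0w0 : Bf n w0 w0 ≠ 0 := by
        intro h0
        exact hw0ne (aniso hn0 l hl0 w0 hw0l hw0dotl h0)
      have hKmw0h : Kf n m w0 ∈ h := by
        have h1 : X + Kf n m w0 ∈ h := hSIMh ((hmemSIM _).mpr hmemX)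
        have h2 := h.sub_mem h1 hXh
        simpa using h2
      have hall : ∀ x : Fin n → ℝ, Bf n x l = 0 → Bf n x m = 0 → Kf n m x ∈ h := by
        intro x hxl hxm
        have hKx : Kf n x w0 ∈ SIM := by
          refine (hmemSIM _).mpr ⟨Kf_mem_so x w0, 0, ?_⟩
          rw [Kf_mulVec, hxl, hw0l]
          simp
        have hbr : ⁅Kf n x w0, Kf n m w0⁆ ∈ h := h.lie_mem (hSIMh hKx) hKmw0h
        rw [lieKK m x w0 w0 hxm hw0m] at hbr
        have h2 : Bf n w0 w0 • Kf n m x ∈ h := by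
          have h3 := h.add_mem hbr (h.smul_mem (Bf n x w0) hKmw0h)
          simpa using h3
        have h4 := h.smul_mem (Bf n w0 w0)⁻¹ h2
        rwa [smul_smul, inv_mul_cancel₀ hBw0w0, one_smul] at h4
      intro Z hZSO
      have hZso : Z ∈ soSet n := (hmemSO Z).mp hZSO
      obtain ⟨hmemZ, hwZl, hwZm⟩ := hdecomp Z hZso
      have h1 : Z + Kf n m (Z.mulVec l - Bf n (Z.mulVec l) m • l) ∈ h :=
        hSIMh ((hmemSIM _).mpr hmemZ)
      have h2 : Kf n m (Z.mulVec l - Bf n (Z.mulVec l) m • l) ∈ h := hall _ hwZl hwZm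
      have h3 := h.sub_mem h1 h2
      simpa using h3
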